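/- For N a non-negative integer and ν ∈ {0,1}: as polynomials in q, the generating function Σ_π q^{|π|} z^{γ(π)} over partitions π into distinct parts ≤ 2N+ν equals Σ_{l=0}^{N} [N choose l]_{q⁴} (−zq;q⁴)_{N−l+ν} (−q/z;q⁴)_l (zq)^{2l}, where γ(π) is the alternating sum of parts of π. Equivalently, the Rogers–Szegő polynomial H_{2N+ν}(zq, q²) = Σ_{l=0}^{2N+ν} [2N+ν choose l]_{q²}(zq)^l equals Σ_{l=0}^{N} [N choose l]_{q⁴} (−zq;q⁴)_{N−l+ν}(−q/z;q⁴)_l (zq)^{2l}. -/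

import Mathlib

def IsDistinctPartition (π : List ℕ) : Prop :=
  π.Chain' (· > ·) ∧ ∀ p ∈ π, 0 < p

def IsPartition (π : List ℕ) : Prop :=
  π.Chain' (· ≥ ·) ∧ ∀ p ∈ π, 0 < p

def oddIdxOdd (π : List ℕ) : ℕ :=
  ((π.zipIdx.map Prod.swap).filter fun p => p.1 % 2 == 0 && p.2 % 2 == 1).length

def evenIdxOdd (π : List ℕ) : ℕ :=
  ((π.zipIdx.map Prod.swap).filter fun p => p.1 % 2 == 1 && p.2 % 2 == 1).length

def bgRank (π : List ℕ) : ℤ := (oddIdxOdd π : ℤ) - evenIdxOdd π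

def altSum : List ℕ → ℤ
  | [] => 0
  | a :: t => (a : ℤ) - altSum t

noncomputable def gaussPoly : ℕ → ℕ → Polynomial ℚ
  | _, 0 => 1
  | 0, _ + 1 => 0
  | m + 1, r + 1 => gaussPoly m r + Polynomial.X ^ (r + 1) * gaussPoly m (r + 1)

noncomputable def gaussZ (m : ℕ) (r : ℤ) : Polynomial ℚ :=
  if 0 ≤ r then gaussPoly m r.toNat else 0

noncomputable def q16 : LaurentPolynomial (Polynomial ℚ) :=
  LaurentPolynomial.C Polynomial.X

noncomputable def z16 : LaurentPolynomial (Polynomial ℚ) := LaurentPolynomial.T 1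

/-- the common right-hand side -/
noncomputable def rhs16 (N ν : ℕ) : LaurentPolynomial (Polynomial ℚ) :=
  ∑ l ∈ Finset.range (N + 1),
    Polynomial.aeval (q16 ^ 4) (gaussPoly N l) *
      (∏ m ∈ Finset.range (N - l + ν), (1 + z16 * q16 * (q16 ^ 4) ^ m)) *
      (∏ m ∈ Finset.range l, (1 + q16 * LaurentPolynomial.T (-1) * (q16 ^ 4) ^ m)) *
      (z16 * q16) ^ (2 * l)

open Polynomial

theorem gauss_zero (m : ℕ) : gaussPoly m 0 = 1 := by cases m <;> rfl

theorem gauss_succ (m r : ℕ) :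
    gaussPoly (m+1) (r+1) = gaussPoly m r + X ^ (r + 1) * gaussPoly m (r + 1) := rfl

theorem gauss_of_lt : ∀ {m r : ℕ}, m < r → gaussPoly m r = 0 := by
  intro m
  induction m with
  | zero =>
    rintro (_ | r) h
    · omega
    · rfl
  | succ m ih =>
    rintro (_ | r) h
    · omega
    · rw [gauss_succ, ih (by omega), ih (by omega), mul_zero, add_zero]

theorem gauss_diag (m : ℕ) : gaussPoly m m = 1 := by
  induction m with
  | zero => rfl
  | succ m ih => rw [gauss_succ, ih, gauss_of_lt (by omega), mul_zero, add_zero]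

theorem gauss_one (m : ℕ) : gaussPoly m 1 = ∑ i ∈ Finset.range m, X ^ i := by
  induction m with
  | zero => rfl
  | succ m ih =>
    have h : gaussPoly (m+1) (0+1) = gaussPoly m 0 + X ^ (0+1) * gaussPoly m (0+1) := gauss_succ m 0
    simp only [zero_add] at h
    rw [h, gauss_zero, ih, Finset.sum_range_succ' (fun i => (X:ℚ[X]) ^ i)]
    rw [pow_one, Finset.mul_sum]
    simp [pow_succ, mul_comm, add_comm]

theorem gauss_pascal2 : ∀ m r : ℕ, gaussPoly (m+1) (r+1) = X ^ (m - r) * gaussPoly m r + gaussPoly m (r+1) := by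
  intro m
  induction m with
  | zero =>
    rintro (_ | r)
    · norm_num [gauss_succ, gauss_zero, gauss_of_lt]
    · simp [gauss_succ, gauss_of_lt]
  | succ m ih =>
    rintro (_ | r)
    · simp only [Nat.sub_zero, gauss_zero, mul_one, zero_add]
      rw [gauss_one, gauss_one, Finset.sum_range_succ _ (m+1)]
      ring
    rcases lt_trichotomy r m with h | h | h
    · obtain ⟨t, ht⟩ : ∃ t, m = r + t + 1 := ⟨m - r - 1, by omega⟩
      subst ht
      have h1 := ih r
      have h2 := ih (r+1)
      rw [show r + t + 1 - r = t + 1 from by omega] at h1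
      rw [show r + t + 1 - (r + 1) = t from by omega] at h2
      rw [show r + t + 1 + 1 - (r + 1) = t + 1 from by omega]
      have h0 := gauss_succ (r+t+1+1) (r+1)
      have h3 := gauss_succ (r+t+1) r
      have h4 := gauss_succ (r+t+1) (r+1)
      linear_combination h0 + h1 + X^(r+2) * h2 - X^(t+1) * h3 - h4
    · subst h
      rw [show r + 1 - (r + 1) = 0 from by omega, gauss_diag, gauss_diag,
        gauss_of_lt (show r + 1 < r + 1 + 1 from by omega)]
      ring
    · rw [gauss_of_lt (by omega), gauss_of_lt (by omega), gauss_of_lt (by omega)]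
      ring


theorem gauss_symm : ∀ m r : ℕ, r ≤ m → gaussPoly m r = gaussPoly m (m - r) := by
  intro m
  induction m with
  | zero => intro r hr; interval_cases r; rfl
  | succ m ih =>
    rintro (_ | r) hr
    · rw [Nat.sub_zero, gauss_zero, gauss_diag]
    rcases eq_or_lt_of_le (Nat.succ_le_succ_iff.mp hr) with h | h
    · subst h
      rw [Nat.sub_self, gauss_diag, gauss_zero]
    · obtain ⟨t, ht⟩ : ∃ t, m = r + t + 1 := ⟨m - r - 1, by omega⟩
      subst ht
      rw [show r + t + 1 + 1 - (r + 1) = t + 1 from by omega]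
      have h1 := gauss_succ (r+t+1) r
      have h2 := gauss_pascal2 (r+t+1) t
      rw [show r + t + 1 - t = r + 1 from by omega] at h2
      have h3 := ih r (by omega)
      rw [show r + t + 1 - r = t + 1 from by omega] at h3
      have h4 := ih (r+1) (by omega)
      rw [show r + t + 1 - (r + 1) = t from by omega] at h4
      linear_combination h1 - h2 + h3 + X^(r+1) * h4

theorem gauss_absorb : ∀ m l : ℕ,
    (1 - X^(l+1)) * gaussPoly (m+1) (l+1) = (1 - X^(m+1)) * gaussPoly m l := by
  intro m
  induction m with
  | zero =>
    rintro (_ | l)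
    · norm_num [gauss_succ, gauss_zero, gauss_of_lt]
    · rw [gauss_of_lt (show (1:ℕ) < l + 1 + 1 from by omega),
        gauss_of_lt (show (0:ℕ) < l + 1 from by omega)]
      ring
  | succ m ih =>
    rintro (_ | l)
    · rw [gauss_zero, zero_add, gauss_one, mul_one]
      have hg := geom_sum_mul (X : ℚ[X]) (m+2)
      linear_combination -hg
    rcases lt_trichotomy l m with h | h | h
    · obtain ⟨t, ht⟩ : ∃ t, m = l + t + 1 := ⟨m - l - 1, by omega⟩
      subst ht
      have hp := gauss_succ (l+t+1+1) (l+1)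
      have hsym := gauss_symm (l+t+1+1) (l+1) (by omega)
      rw [show l + t + 1 + 1 - (l + 1) = t + 1 from by omega] at hsym
      have hIH1 := ih t
      have hsym2 := gauss_symm (l+t+1) t (by omega)
      rw [show l + t + 1 - t = l + 1 from by omega] at hsym2
      have hIH2 := ih (l+1)
      linear_combination (1-X^(l+2))*hp - X^(l+2)*(1-X^(t+1))*hsym - X^(l+2)*hIH1
        - X^(l+2)*(1-X^(l+t+2))*hsym2 + X^(l+2)*hIH2
    · subst h
      rw [gauss_diag, gauss_diag]
    · rw [gauss_of_lt (show m + 1 < l + 1 from by omega),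
        gauss_of_lt (show m + 1 + 1 < l + 1 + 1 from by omega), mul_zero, mul_zero]

theorem gauss_dual : ∀ m l : ℕ,
    (1 - X^(m + 1 - l)) * gaussPoly (m+1) l = (1 - X^(m+1)) * gaussPoly m l := by
  rintro m (_ | l)
  · rw [Nat.sub_zero, gauss_zero, gauss_zero]
  rcases lt_trichotomy l m with h | h | h
  · obtain ⟨t, ht⟩ : ∃ t, m = l + t + 1 := ⟨m - l - 1, by omega⟩
    subst ht
    rw [show l + t + 1 + 1 - (l + 1) = t + 1 from by omega]
    have hsym := gauss_symm (l+t+1+1) (l+1) (by omega)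
    rw [show l + t + 1 + 1 - (l + 1) = t + 1 from by omega] at hsym
    have ha := gauss_absorb (l+t+1) t
    have hsym2 := gauss_symm (l+t+1) t (by omega)
    rw [show l + t + 1 - t = l + 1 from by omega] at hsym2
    linear_combination (1-X^(t+1)) * hsym + ha + (1-X^(l+t+2)) * hsym2
  · subst h
    rw [show l + 1 - (l + 1) = 0 from by omega, pow_zero, sub_self, zero_mul,
      gauss_of_lt (show l < l + 1 from by omega), mul_zero]
  · rw [gauss_of_lt (show m < l + 1 from by omega),
      gauss_of_lt (show m + 1 < l + 1 from by omega), mul_zero, mul_zero]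

theorem gauss_three (m j : ℕ) :
    gaussPoly (m+2) (j+1)
      = gaussPoly (m+1) (j+1) + gaussPoly (m+1) j - (1 - X^(m+1)) * gaussPoly m j := by
  have hp := gauss_succ (m+1) j
  have ha := gauss_absorb m j
  linear_combination hp - ha

open LaurentPolynomial

noncomputable def Hh (M : ℕ) : LaurentPolynomial (Polynomial ℚ) :=
  ∑ l ∈ Finset.range (M+1), Polynomial.aeval (q16^2) (gaussPoly M l) * (z16 * q16)^l

noncomputable def Hp (M : ℕ) : LaurentPolynomial (Polynomial ℚ) :=
  ∑ l ∈ Finset.range (M+1), Polynomial.aeval (q16^2) (gaussPoly M l) * q16^l * z16^(M - l)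

theorem ev_zero (v : LaurentPolynomial (Polynomial ℚ)) (m : ℕ) :
    Polynomial.aeval v (gaussPoly m 0) = 1 := by rw [gauss_zero, map_one]

theorem ev_of_lt (v : LaurentPolynomial (Polynomial ℚ)) {m r : ℕ} (h : m < r) :
    Polynomial.aeval v (gaussPoly m r) = 0 := by rw [gauss_of_lt h, map_zero]

theorem ev2_pascal2 (M j : ℕ) :
    Polynomial.aeval (q16^2) (gaussPoly (M+1) (j+1))
      = q16^(2*(M-j)) * Polynomial.aeval (q16^2) (gaussPoly M j)
        + Polynomial.aeval (q16^2) (gaussPoly M (j+1)) := by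
  rw [gauss_pascal2 M j, map_add, map_mul, map_pow, Polynomial.aeval_X, ← pow_mul]

theorem ev2_three (M j : ℕ) :
    Polynomial.aeval (q16^2) (gaussPoly (M+2) (j+1))
      = Polynomial.aeval (q16^2) (gaussPoly (M+1) (j+1))
        + Polynomial.aeval (q16^2) (gaussPoly (M+1) j)
        - (1 - q16^(2*(M+1))) * Polynomial.aeval (q16^2) (gaussPoly M j) := by
  rw [gauss_three M j, map_sub, map_add, map_mul, map_sub, map_one, map_pow, Polynomial.aeval_X,
    ← pow_mul]

theorem key_reflect (M : ℕ) :
    q16^(M+1) * z16 * Hp M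
      = ∑ j ∈ Finset.range (M+1),
          Polynomial.aeval (q16^2) (gaussPoly M j) * (q16^(2*(M-j)) * (z16 * q16)^(j+1)) := by
  rw [Hp, Finset.mul_sum]
  conv_lhs => rw [← Finset.sum_range_reflect]
  refine Finset.sum_congr rfl fun j hj => ?_
  rw [Finset.mem_range] at hj
  rw [show M + 1 - 1 - j = M - j from by omega, ← gauss_symm M j (by omega),
    show M - (M - j) = j from by omega]
  obtain ⟨s, rfl⟩ : ∃ s, M = j + s := ⟨M - j, by omega⟩
  rw [show j + s - j = s from by omega]
  ring

theorem key_reflect' (M : ℕ) :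
    q16^(M+1) * Hh M
      = ∑ j ∈ Finset.range (M+1),
          Polynomial.aeval (q16^2) (gaussPoly M j) * (q16^(2*(M-j)) * (q16^(j+1) * z16^(M-j))) := by
  rw [Hh, Finset.mul_sum]
  conv_lhs => rw [← Finset.sum_range_reflect]
  refine Finset.sum_congr rfl fun j hj => ?_
  rw [Finset.mem_range] at hj
  rw [show M + 1 - 1 - j = M - j from by omega, ← gauss_symm M j (by omega)]
  obtain ⟨s, rfl⟩ : ∃ s, M = j + s := ⟨M - j, by omega⟩
  rw [show j + s - j = s from by omega]
  ring

theorem Hh_rec (M : ℕ) : Hh (M+1) = Hh M + q16^(M+1) * z16 * Hp M := by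
  have h1 : Hh (M+1)
      = (∑ j ∈ Finset.range (M+1),
          Polynomial.aeval (q16^2) (gaussPoly (M+1) (j+1)) * (z16 * q16)^(j+1)) + 1 := by
    rw [Hh, Finset.sum_range_succ' (fun l => Polynomial.aeval (q16^2) (gaussPoly (M+1) l) * (z16 * q16)^l) (M+1)]
    rw [ev_zero, pow_zero, mul_one]
  have h2 : ∀ j ∈ Finset.range (M+1),
      Polynomial.aeval (q16^2) (gaussPoly (M+1) (j+1)) * (z16 * q16)^(j+1)
        = Polynomial.aeval (q16^2) (gaussPoly M j) * (q16^(2*(M-j)) * (z16 * q16)^(j+1))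
          + Polynomial.aeval (q16^2) (gaussPoly M (j+1)) * (z16 * q16)^(j+1) := by
    intro j _
    rw [ev2_pascal2]
    ring
  rw [h1, Finset.sum_congr rfl h2, Finset.sum_add_distrib, ← key_reflect]
  have h3 : ∑ j ∈ Finset.range (M+1),
      Polynomial.aeval (q16^2) (gaussPoly M (j+1)) * (z16 * q16)^(j+1) = Hh M - 1 := by
    rw [Finset.sum_range_succ, ev_of_lt _ (by omega), zero_mul, add_zero, Hh,
      Finset.sum_range_succ' (fun l => Polynomial.aeval (q16^2) (gaussPoly M l) * (z16 * q16)^l) M]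
    rw [ev_zero, pow_zero, mul_one]
    ring
  rw [h3]
  ring

theorem Hp_rec (M : ℕ) : Hp (M+1) = z16 * Hp M + q16^(M+1) * Hh M := by
  have h1 : Hp (M+1)
      = (∑ j ∈ Finset.range (M+1),
          Polynomial.aeval (q16^2) (gaussPoly (M+1) (j+1)) * q16^(j+1) * z16^(M - j)) + z16^(M+1) := by
    rw [Hp, Finset.sum_range_succ' (fun l => Polynomial.aeval (q16^2) (gaussPoly (M+1) l) * q16^l * z16^(M+1-l)) (M+1)]
    rw [ev_zero, pow_zero, mul_one, Nat.sub_zero, one_mul]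
    congr 1
    refine Finset.sum_congr rfl fun j hj => ?_
    rw [Finset.mem_range] at hj
    rw [show M + 1 - (j + 1) = M - j from by omega]
  have h2 : ∀ j ∈ Finset.range (M+1),
      Polynomial.aeval (q16^2) (gaussPoly (M+1) (j+1)) * q16^(j+1) * z16^(M - j)
        = Polynomial.aeval (q16^2) (gaussPoly M j) * (q16^(2*(M-j)) * (q16^(j+1) * z16^(M-j)))
          + Polynomial.aeval (q16^2) (gaussPoly M (j+1)) * q16^(j+1) * z16^(M - j) := by
    intro j _
    rw [ev2_pascal2]
    ring
  rw [h1, Finset.sum_congr rfl h2, Finset.sum_add_distrib, ← key_reflect']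
  have h3 : ∑ j ∈ Finset.range (M+1),
      Polynomial.aeval (q16^2) (gaussPoly M (j+1)) * q16^(j+1) * z16^(M - j)
        = z16 * Hp M - z16^(M+1) := by
    rw [Finset.sum_range_succ, ev_of_lt _ (by omega), zero_mul, zero_mul, add_zero, Hp, Finset.mul_sum,
      Finset.sum_range_succ' (fun l => z16 * (Polynomial.aeval (q16^2) (gaussPoly M l) * q16^l * z16^(M-l))) M]
    rw [ev_zero, pow_zero, mul_one, Nat.sub_zero]
    have h4 : ∀ j ∈ Finset.range M,
        z16 * (Polynomial.aeval (q16^2) (gaussPoly M (j+1)) * q16^(j+1) * z16^(M-(j+1)))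
          = Polynomial.aeval (q16^2) (gaussPoly M (j+1)) * q16^(j+1) * z16^(M - j) := by
      intro j hj
      rw [Finset.mem_range] at hj
      obtain ⟨s, rfl⟩ : ∃ s, M = j + s + 1 := ⟨M - j - 1, by omega⟩
      rw [show j + s + 1 - (j + 1) = s from by omega, show j + s + 1 - j = s + 1 from by omega]
      ring
    rw [Finset.sum_congr rfl h4]
    ring
  rw [h3]
  ring

theorem Hh_three (M : ℕ) :
    Hh (M+2) = (1 + z16 * q16) * Hh (M+1) - (1 - q16^(2*(M+1))) * (z16 * q16) * Hh M := by
  have h1 : Hh (M+2)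
      = (∑ j ∈ Finset.range (M+2),
          Polynomial.aeval (q16^2) (gaussPoly (M+2) (j+1)) * (z16 * q16)^(j+1)) + 1 := by
    rw [Hh, Finset.sum_range_succ' (fun l => Polynomial.aeval (q16^2) (gaussPoly (M+2) l) * (z16 * q16)^l) (M+2)]
    rw [ev_zero, pow_zero, mul_one]
  have h2 : ∀ j ∈ Finset.range (M+2),
      Polynomial.aeval (q16^2) (gaussPoly (M+2) (j+1)) * (z16 * q16)^(j+1)
        = Polynomial.aeval (q16^2) (gaussPoly (M+1) (j+1)) * (z16 * q16)^(j+1)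
          + (z16 * q16) * (Polynomial.aeval (q16^2) (gaussPoly (M+1) j) * (z16 * q16)^j)
          - (1 - q16^(2*(M+1))) * ((z16 * q16) * (Polynomial.aeval (q16^2) (gaussPoly M j) * (z16 * q16)^j)) := by
    intro j _
    rw [ev2_three]
    ring
  have h3 : ∑ j ∈ Finset.range (M+2),
      Polynomial.aeval (q16^2) (gaussPoly (M+1) (j+1)) * (z16 * q16)^(j+1) = Hh (M+1) - 1 := by
    rw [Finset.sum_range_succ, ev_of_lt _ (by omega), zero_mul, add_zero, Hh,
      Finset.sum_range_succ' (fun l => Polynomial.aeval (q16^2) (gaussPoly (M+1) l) * (z16 * q16)^l) (M+1)]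
    rw [ev_zero, pow_zero, mul_one]
    ring
  have h4 : ∑ j ∈ Finset.range (M+2),
      (z16 * q16) * (Polynomial.aeval (q16^2) (gaussPoly (M+1) j) * (z16 * q16)^j)
        = (z16 * q16) * Hh (M+1) := by
    rw [Hh, Finset.mul_sum]
  have h5 : ∑ j ∈ Finset.range (M+2),
      (1 - q16^(2*(M+1))) * ((z16 * q16) * (Polynomial.aeval (q16^2) (gaussPoly M j) * (z16 * q16)^j))
        = (1 - q16^(2*(M+1))) * ((z16 * q16) * Hh M) := by
    rw [Finset.sum_range_succ, ev_of_lt _ (by omega), zero_mul, mul_zero, mul_zero, add_zero, Hh]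
    rw [Finset.mul_sum, Finset.mul_sum]
  rw [h1, Finset.sum_congr rfl h2, Finset.sum_sub_distrib, Finset.sum_add_distrib, h3, h4, h5]
  ring

noncomputable def Pp (a : ℕ) : LaurentPolynomial (Polynomial ℚ) :=
  ∏ m ∈ Finset.range a, (1 + z16 * q16 * (q16 ^ 4) ^ m)

noncomputable def Qa (l : ℕ) : LaurentPolynomial (Polynomial ℚ) :=
  ∏ m ∈ Finset.range l, (z16 + q16 * (q16 ^ 4) ^ m)

noncomputable def Rr (N ν : ℕ) : LaurentPolynomial (Polynomial ℚ) :=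
  ∑ l ∈ Finset.range (N + 1),
    Polynomial.aeval (q16 ^ 4) (gaussPoly N l) * Pp (N - l + ν) * Qa l * z16^l * q16^(2*l)

theorem Tneg_z : (LaurentPolynomial.T (-1) : LaurentPolynomial (Polynomial ℚ)) * z16 = 1 := by
  rw [z16, ← LaurentPolynomial.T_add, show (-1 : ℤ) + 1 = 0 from by ring, LaurentPolynomial.T_zero]

theorem Pp_succ (a : ℕ) : Pp (a+1) = Pp a * (1 + z16 * q16 * (q16 ^ 4) ^ a) :=
  Finset.prod_range_succ _ a

theorem Qa_succ (l : ℕ) : Qa (l+1) = Qa l * (z16 + q16 * (q16 ^ 4) ^ l) :=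
  Finset.prod_range_succ _ l

theorem Pp_def (a : ℕ) : Pp a = ∏ m ∈ Finset.range a, (1 + z16 * q16 * (q16 ^ 4) ^ m) := rfl

theorem prodT (l : ℕ) :
    (∏ m ∈ Finset.range l, (1 + q16 * LaurentPolynomial.T (-1) * (q16 ^ 4) ^ m))
      = LaurentPolynomial.T (-1) ^ l * Qa l := by
  induction l with
  | zero => simp [Qa]
  | succ l ih =>
    rw [Finset.prod_range_succ, ih, Qa_succ]
    linear_combination (-(LaurentPolynomial.T (-1 : ℤ) ^ l * Qa l)) * Tneg_z

theorem rhs16_eq (N ν : ℕ) : rhs16 N ν = Rr N ν := by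
  rw [rhs16, Rr]
  refine Finset.sum_congr rfl fun l _ => ?_
  have hz : (LaurentPolynomial.T (-1) : LaurentPolynomial (Polynomial ℚ)) * z16^2 = z16 := by
    rw [pow_two, ← mul_assoc, Tneg_z, one_mul]
  have h2 : LaurentPolynomial.T (-1 : ℤ) ^ l * (z16 * q16) ^ (2*l) = z16^l * q16^(2*l) := by
    rw [mul_pow, pow_mul z16 2 l, ← mul_assoc, ← mul_pow, hz]
  rw [← Pp_def, prodT]
  linear_combination ((Polynomial.aeval (q16^4) (gaussPoly N l)) * Pp (N - l + ν) * Qa l) * h2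

theorem ev4_dual (N l : ℕ) :
    (1 - (q16^4)^(N+1-l)) * Polynomial.aeval (q16^4) (gaussPoly (N+1) l)
      = (1 - (q16^4)^(N+1)) * Polynomial.aeval (q16^4) (gaussPoly N l) := by
  have h := congrArg (Polynomial.aeval (q16^4)) (gauss_dual N l)
  simpa only [map_mul, map_sub, map_one, map_pow, Polynomial.aeval_X] using h

theorem ev4_absorb (N j : ℕ) :
    (1 - (q16^4)^(j+1)) * Polynomial.aeval (q16^4) (gaussPoly (N+1) (j+1))
      = (1 - (q16^4)^(N+1)) * Polynomial.aeval (q16^4) (gaussPoly N j) := by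
  have h := congrArg (Polynomial.aeval (q16^4)) (gauss_absorb N j)
  simpa only [map_mul, map_sub, map_one, map_pow, Polynomial.aeval_X] using h

theorem RI (N : ℕ) :
    Rr (N+1) 1 = (1 + z16 * q16) * Rr (N+1) 0
      - (1 - (q16^4)^(N+1)) * (z16 * q16) * Rr N 1 := by
  have hsplit : ∀ l ∈ Finset.range (N+2),
      Polynomial.aeval (q16 ^ 4) (gaussPoly (N+1) l) * Pp (N+1 - l + 1) * Qa l * z16^l * q16^(2*l)
        = (1 + z16 * q16) * (Polynomial.aeval (q16 ^ 4) (gaussPoly (N+1) l) * Pp (N+1 - l + 0) * Qa l * z16^l * q16^(2*l))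
          - (1 - (q16^4)^(N+1)) * (z16 * q16) * (Polynomial.aeval (q16 ^ 4) (gaussPoly N l) * Pp (N+1-l) * Qa l * z16^l * q16^(2*l)) := by
    intro l _
    have hd := ev4_dual N l
    rw [add_zero, Pp_succ (N+1-l)]
    linear_combination (-(z16 * q16) * (Pp (N+1-l) * Qa l * z16^l * q16^(2*l))) * hd
  rw [Rr, Finset.sum_congr rfl hsplit, Finset.sum_sub_distrib, ← Finset.mul_sum, ← Finset.mul_sum, ← Rr]
  have hlast : ∑ l ∈ Finset.range (N+2),
      Polynomial.aeval (q16 ^ 4) (gaussPoly N l) * Pp (N+1-l) * Qa l * z16^l * q16^(2*l) = Rr N 1 := by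
    rw [Finset.sum_range_succ, ev_of_lt _ (by omega), zero_mul, zero_mul, zero_mul, zero_mul, add_zero, Rr]
    refine Finset.sum_congr rfl fun l hl => ?_
    rw [Finset.mem_range] at hl
    rw [show N + 1 - l = N - l + 1 from by omega]
  rw [hlast]

theorem Qa_zero : Qa 0 = 1 := Finset.prod_range_zero _

theorem ev4_succ (m r : ℕ) :
    Polynomial.aeval (q16^4) (gaussPoly (m+1) (r+1))
      = Polynomial.aeval (q16^4) (gaussPoly m r)
        + (q16^4)^(r+1) * Polynomial.aeval (q16^4) (gaussPoly m (r+1)) := by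
  rw [gauss_succ, map_add, map_mul, map_pow, Polynomial.aeval_X]

theorem RII_succ (N : ℕ) :
    Rr (N+2) 0 = (1 + z16 * q16) * Rr (N+1) 1
      - (1 - (q16^4)^(N+1) * q16^2) * (z16 * q16) * Rr (N+1) 0 := by
  classical
  set c4 : ℕ → LaurentPolynomial (Polynomial ℚ) :=
    fun l => Polynomial.aeval (q16^4) (gaussPoly (N+1) l) with hc4
  set cN : ℕ → LaurentPolynomial (Polynomial ℚ) :=
    fun l => Polynomial.aeval (q16^4) (gaussPoly N l) with hcN
  set bZ : ℕ → LaurentPolynomial (Polynomial ℚ) :=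
    fun l => Polynomial.aeval (q16^4) (gaussZ N ((l:ℤ)-1)) with hbZ
  set Fa : ℕ → LaurentPolynomial (Polynomial ℚ) :=
    fun l => (q16^4)^l * c4 l * Pp (N+2-l) * Qa l * z16^l * q16^(2*l) with hFa
  set Fb : ℕ → LaurentPolynomial (Polynomial ℚ) :=
    fun j => c4 j * Pp (N+1-j) * Qa (j+1) * z16^(j+1) * q16^(2*(j+1)) with hFb
  set Xx : ℕ → LaurentPolynomial (Polynomial ℚ) :=
    fun l => cN l * Pp (N+1-l) * Qa l * (z16^l * q16^(2*l))
      * (z16^2*q16^2 + z16*q16^3*(q16^4)^l) with hXx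
  set Yy : ℕ → LaurentPolynomial (Polynomial ℚ) :=
    fun l => bZ l * (Pp (N+1-l) * (1 + z16*q16*(q16^4)^(N+1-l))) * Qa l * (z16^l * q16^(2*l)) with hYy
  have hA : Rr (N+2) 0 = (∑ l ∈ Finset.range (N+2), Fa l) + ∑ j ∈ Finset.range (N+2), Fb j := by
    rw [Rr, Finset.sum_range_succ'
      (fun l => Polynomial.aeval (q16^4) (gaussPoly (N+2) l) * Pp (N+2-l+0) * Qa l * z16^l * q16^(2*l)) (N+2)]
    have e1 : ∀ j ∈ Finset.range (N+2),
        Polynomial.aeval (q16^4) (gaussPoly (N+2) (j+1)) * Pp (N+2-(j+1)+0) * Qa (j+1) * z16^(j+1) * q16^(2*(j+1))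
          = Fb j + Fa (j+1) := by
      intro j hj
      rw [Finset.mem_range] at hj
      have hs := ev4_succ (N+1) j
      rw [show N+2-(j+1)+0 = N+1-j from by omega, hs, hFa, hFb]
      simp only []
      rw [show N+2-(j+1) = N+1-j from by omega, hc4]
      ring
    rw [Finset.sum_congr rfl e1, Finset.sum_add_distrib]
    have e2 : ∑ j ∈ Finset.range (N+2), Fa (j+1)
        + Polynomial.aeval (q16^4) (gaussPoly (N+2) 0) * Pp (N+2-0+0) * Qa 0 * z16^0 * q16^(2*0)
        = ∑ l ∈ Finset.range (N+2), Fa l := by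
      have e3 : ∑ l ∈ Finset.range (N+3), Fa l
          = ∑ j ∈ Finset.range (N+2), Fa (j+1) + Fa 0 := Finset.sum_range_succ' Fa (N+2)
      have e4 : ∑ l ∈ Finset.range (N+3), Fa l
          = ∑ l ∈ Finset.range (N+2), Fa l + Fa (N+2) := Finset.sum_range_succ Fa (N+2)
      have e5 : Fa (N+2) = 0 := by
        rw [hFa]
        simp only []
        rw [hc4]
        simp only []
        rw [ev_of_lt _ (by omega)]
        ring
      have e6 : Fa 0 = Polynomial.aeval (q16^4) (gaussPoly (N+2) 0) * Pp (N+2-0+0) * Qa 0 * z16^0 * q16^(2*0) := by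
        rw [hFa]
        simp only []
        rw [hc4]
        simp only []
        rw [ev_zero, ev_zero, Qa_zero]
        norm_num
      rw [e4, e5, add_zero] at e3
      rw [← e6, ← e3]
    rw [← e2]
    ring
  -- per-term claim
  have claim : ∀ l ∈ Finset.range (N+2),
      Fa l + Fb l
        = ((1 + z16 * q16) * (c4 l * Pp (N+1-l+1) * Qa l * z16^l * q16^(2*l))
            - (1 - (q16^4)^(N+1) * q16^2) * (z16 * q16) * (c4 l * Pp (N+1-l+0) * Qa l * z16^l * q16^(2*l)))
          + (1 - (q16^4)^(N+1)) * (Xx l - Yy l) := by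
    intro l hl
    rw [Finset.mem_range] at hl
    have hd : (1 - (q16^4)^(N+1-l)) * c4 l = (1 - (q16^4)^(N+1)) * cN l := ev4_dual N l
    have hab : (1 - (q16^4)^l) * c4 l = (1 - (q16^4)^(N+1)) * bZ l := by
      rcases l with _ | j
      · rw [hbZ, hc4]
        simp only []
        norm_num [gaussZ]
      · rw [hbZ, hc4]
        simp only []
        rw [show ((j+1:ℕ):ℤ) - 1 = (j:ℤ) from by push_cast; ring]
        rw [show gaussZ N (j:ℤ) = gaussPoly N j from by simp [gaussZ]]
        exact ev4_absorb N j
    have hql : (q16^4)^l * (q16^4)^(N+1-l) = (q16^4)^(N+1) := by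
      rw [← pow_add]
      congr 1
      omega
    rw [hFa, hFb, hXx, hYy]
    simp only []
    rw [show N+2-l = (N+1-l)+1 from by omega, Pp_succ (N+1-l), Qa_succ l, add_zero]
    linear_combination (Pp (N+1-l) * Qa l * (z16^l * q16^(2*l))) *
      ( (-(1 + z16*q16*(q16^4)^(N+1-l))) * hab
        + (z16^2*q16^2 + z16*q16^3*(q16^4)^l) * hd
        + z16*q16^3 * (c4 l) * hql )
  -- X and Y sums are equal
  have hY0 : Yy 0 = 0 := by
    rw [hYy, hbZ]
    simp only []
    rw [show ((0:ℕ):ℤ) - 1 = (-1 : ℤ) from by norm_num]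
    rw [show gaussZ N (-1 : ℤ) = 0 from by simp [gaussZ]]
    simp
  have hXtop : Xx (N+1) = 0 := by
    rw [hXx, hcN]
    simp only []
    rw [ev_of_lt _ (by omega)]
    ring
  have hXY : ∀ j ∈ Finset.range (N+1), Xx j = Yy (j+1) := by
    intro j hj
    rw [Finset.mem_range] at hj
    rw [hXx, hYy, hbZ]
    simp only []
    rw [show ((j+1:ℕ):ℤ) - 1 = (j:ℤ) from by push_cast; ring]
    rw [show gaussZ N (j:ℤ) = gaussPoly N j from by simp [gaussZ]]
    rw [show N+1-(j+1) = N-j from by omega, show N+1-j = (N-j)+1 from by omega,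
      Pp_succ (N-j), Qa_succ j, hcN]
    ring
  have hsumXY : ∑ l ∈ Finset.range (N+2), Xx l = ∑ l ∈ Finset.range (N+2), Yy l := by
    rw [Finset.sum_range_succ Xx (N+1), hXtop, add_zero,
      Finset.sum_range_succ' Yy (N+1), hY0, add_zero]
    exact Finset.sum_congr rfl hXY
  -- assemble
  rw [hA, ← Finset.sum_add_distrib, Finset.sum_congr rfl claim, Finset.sum_add_distrib,
    Finset.sum_sub_distrib, ← Finset.mul_sum, ← Finset.mul_sum, ← Finset.mul_sum,
    Finset.sum_sub_distrib, hsumXY, sub_self, mul_zero, add_zero, Rr, Rr]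

theorem RII0 : Rr 1 0 = (1 + z16 * q16) * Rr 0 1
    - (1 - (q16^4)^0 * q16^2) * (z16 * q16) * Rr 0 0 := by
  rw [Rr, Rr, Rr]
  simp only [Finset.sum_range_succ, Finset.sum_range_zero, zero_add, Pp, Qa,
    Finset.prod_range_succ, Finset.prod_range_zero, Finset.prod_range_one, pow_zero, pow_one,
    one_mul, mul_one, Nat.sub_zero, Nat.add_zero, Nat.sub_self, gauss_zero, gauss_diag, map_one]
  ring

theorem RII (N : ℕ) : Rr (N+1) 0 = (1 + z16 * q16) * Rr N 1
    - (1 - (q16^4)^N * q16^2) * (z16 * q16) * Rr N 0 := by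
  cases N with
  | zero => exact RII0
  | succ N => exact RII_succ N

theorem mainB : ∀ N : ℕ, Hh (2*N) = Rr N 0 ∧ Hh (2*N+1) = Rr N 1 := by
  intro N
  induction N with
  | zero =>
    constructor
    · rw [show 2*0 = 0 from rfl, Hh, Rr]
      simp [Finset.sum_range_one, gauss_zero, Qa_zero, Pp]
    · rw [show 2*0+1 = 1 from rfl, Hh, Rr]
      simp only [Finset.sum_range_succ, Finset.sum_range_zero, zero_add, Pp, Qa,
        Finset.prod_range_succ, Finset.prod_range_zero, Finset.prod_range_one, pow_zero, pow_one,
        one_mul, mul_one, Nat.sub_zero, Nat.add_zero, Nat.sub_self, gauss_zero, gauss_diag, map_one]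
      ring
  | succ N ih =>
    obtain ⟨ih0, ih1⟩ := ih
    have h3 := Hh_three (2*N)
    rw [ih0, ih1] at h3
    have hco : q16^(2*(2*N+1)) = (q16^4)^N * q16^2 := by
      rw [← pow_mul, ← pow_add]
      congr 1
      ring
    rw [hco] at h3
    have h0 : Hh (2*(N+1)) = Rr (N+1) 0 := by
      rw [show 2*(N+1) = 2*N+2 from by ring, h3, ← RII N]
    constructor
    · exact h0
    · have h4 := Hh_three (2*N+1)
      rw [ih1] at h4
      rw [show 2*N+1+1 = 2*(N+1) from by ring, h0] at h4
      have hco2 : q16^(2*(2*(N+1))) = (q16^4)^(N+1) := by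
        rw [← pow_mul]
        congr 1
        ring
      rw [hco2] at h4
      rw [show 2*(N+1)+1 = 2*N+1+2 from by ring, h4, ← RI N]

theorem partB (N ν : ℕ) (hν : ν ≤ 1) :
    (∑ l ∈ Finset.range (2 * N + ν + 1),
        Polynomial.aeval (q16 ^ 2) (gaussPoly (2 * N + ν) l) * (z16 * q16) ^ l) = rhs16 N ν := by
  have hH : (∑ l ∈ Finset.range (2 * N + ν + 1),
      Polynomial.aeval (q16 ^ 2) (gaussPoly (2 * N + ν) l) * (z16 * q16) ^ l) = Hh (2*N+ν) := rfl
  rw [hH, rhs16_eq]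
  interval_cases ν
  · rw [Nat.add_zero]
    exact (mainB N).1
  · exact (mainB N).2

/-! ## Part A : combinatorial side -/

noncomputable def dl (S : Finset ℕ) : List ℕ := (S.sort (· ≤ ·)).reverse

theorem mem_dl {x : ℕ} {S : Finset ℕ} : x ∈ dl S ↔ x ∈ S := by
  simp [dl, Finset.mem_sort]

theorem dl_nodup (S : Finset ℕ) : (dl S).Nodup :=
  List.nodup_reverse.mpr (Finset.sort_nodup S _)

theorem dl_pairwise (S : Finset ℕ) : (dl S).Pairwise (· > ·) := by
  have h1 : (dl S).Pairwise (fun a b => b ≤ a) := by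
    rw [dl, List.pairwise_reverse]
    exact Finset.pairwise_sort S (· ≤ ·)
  exact (h1.and (dl_nodup S)).imp (fun {a b} h => lt_of_le_of_ne h.1 (Ne.symm h.2))

theorem dl_chain' (S : Finset ℕ) : (dl S).Chain' (· > ·) :=
  List.isChain_iff_pairwise.mpr (dl_pairwise S)

theorem toFinset_dl (S : Finset ℕ) : (dl S).toFinset = S := by
  ext x
  simp [dl, Finset.mem_sort]

theorem dl_toFinset : ∀ {π : List ℕ}, π.Chain' (· > ·) → dl (π.toFinset) = π := by
  intro π hπ
  have hpw : π.Pairwise (· > ·) := List.isChain_iff_pairwise.mp hπ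
  have hnd : π.Nodup := hpw.imp (fun {a b} h => Nat.ne_of_gt h)
  haveI : Std.Antisymm (· > · : ℕ → ℕ → Prop) := ⟨fun a b h1 h2 => by omega⟩
  refine List.Perm.eq_of_pairwise' (dl_pairwise _) hpw ?_
  exact List.perm_of_nodup_nodup_toFinset_eq (dl_nodup _) hnd (toFinset_dl _)

theorem dl_insert {a : ℕ} {S : Finset ℕ} (h : ∀ x ∈ S, x < a) :
    dl (insert a S) = a :: dl S := by
  have hch : (a :: dl S).Chain' (· > ·) := by
    rw [List.Chain', List.isChain_iff_pairwise, List.pairwise_cons]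
    exact ⟨fun b hb => h b (mem_dl.mp hb), dl_pairwise S⟩
  have := dl_toFinset hch
  rwa [List.toFinset_cons, toFinset_dl] at this

theorem alt_bounds : ∀ {π : List ℕ}, π.Chain' (· > ·) →
    0 ≤ altSum π ∧ altSum π ≤ (π.headD 0 : ℤ) := by
  intro π
  induction π with
  | nil => intro _; simp [altSum]
  | cons a t ih =>
    intro hch
    rw [List.Chain', List.isChain_cons] at hch
    obtain ⟨hhead, htail⟩ := hch
    obtain ⟨h1, h2⟩ := ih htail
    show 0 ≤ (a : ℤ) - altSum t ∧ (a : ℤ) - altSum t ≤ (a : ℤ)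
    cases t with
    | nil => simp [altSum]
    | cons b t' =>
      have hba : b < a := hhead b rfl
      simp only [List.headD_cons] at h2
      omega

theorem sum_bound : ∀ (M : ℕ) (π : List ℕ), π.Chain' (· > ·) → (∀ p ∈ π, p ≤ M) →
    2 * π.sum ≤ M * (M+1) := by
  intro M
  induction M with
  | zero =>
    intro π _ hle
    have : π.sum = 0 := List.sum_eq_zero (fun p hp => Nat.le_zero.mp (hle p hp))
    omega
  | succ M ih =>
    intro π hch hle
    cases π with
    | nil => simp
    | cons a t =>
      have hpw := List.isChain_iff_pairwise.mp hch
      rw [List.pairwise_cons] at hpw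
      have ha : a ≤ M + 1 := hle a (by simp)
      have ht := ih t (List.isChain_iff_pairwise.mpr hpw.2)
        (fun p hp => by have := hpw.1 p hp; omega)
      rw [List.sum_cons]
      have hnl : (M+1) * (M+1+1) = M*(M+1) + 2*(M+1) := by ring
      omega

noncomputable def Gg (M : ℕ) : LaurentPolynomial (Polynomial ℚ) :=
  ∑ S ∈ (Finset.Icc 1 M).powerset, q16^((dl S).sum) * z16^((altSum (dl S)).toNat)

noncomputable def Gp (M : ℕ) : LaurentPolynomial (Polynomial ℚ) :=
  ∑ S ∈ (Finset.Icc 1 M).powerset, q16^((dl S).sum) * z16^(M - (altSum (dl S)).toNat)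

theorem Icc_succ (M : ℕ) : Finset.Icc 1 (M+1) = insert (M+1) (Finset.Icc 1 M) := by
  ext x
  simp only [Finset.mem_Icc, Finset.mem_insert]
  omega

theorem alt_le (M : ℕ) {S : Finset ℕ} (hS : S ⊆ Finset.Icc 1 M) :
    (altSum (dl S)).toNat ≤ M := by
  have hb := alt_bounds (dl_chain' S)
  have hh : (dl S).headD 0 ≤ M := by
    cases hd : dl S with
    | nil => simp
    | cons a t =>
      have ha : a ∈ dl S := by rw [hd]; simp
      have := (Finset.mem_Icc.mp (hS (mem_dl.mp ha))).2
      simpa [hd] using this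
  omega

theorem dl_insert_top (M : ℕ) {S : Finset ℕ} (hS : S ⊆ Finset.Icc 1 M) :
    dl (insert (M+1) S) = (M+1) :: dl S :=
  dl_insert (fun x hx => by have := (Finset.mem_Icc.mp (hS hx)).2; omega)

theorem Gg_rec (M : ℕ) : Gg (M+1) = Gg M + q16^(M+1) * z16 * Gp M := by
  rw [Gg, Icc_succ, Finset.sum_powerset_insert (by simp), ← Gg]
  congr 1
  rw [Gp, Finset.mul_sum]
  refine Finset.sum_congr rfl fun S hS => ?_
  rw [Finset.mem_powerset] at hS
  rw [dl_insert_top M hS]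
  have hb := alt_bounds (dl_chain' S)
  have hk := alt_le M hS
  show q16 ^ (M + 1 + (dl S).sum) * z16 ^ ((M+1 : ℕ) - altSum (dl S)).toNat = _
  rw [show ((M+1 : ℕ) - altSum (dl S)).toNat = (M - (altSum (dl S)).toNat) + 1 from by omega,
    pow_add, pow_succ]
  ring

theorem Gp_rec (M : ℕ) : Gp (M+1) = z16 * Gp M + q16^(M+1) * Gg M := by
  rw [Gp, Icc_succ, Finset.sum_powerset_insert (by simp)]
  congr 1
  · rw [Gp, Finset.mul_sum]
    refine Finset.sum_congr rfl fun S hS => ?_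
    rw [Finset.mem_powerset] at hS
    have hk := alt_le M hS
    rw [show M + 1 - (altSum (dl S)).toNat = (M - (altSum (dl S)).toNat) + 1 from by omega,
      pow_succ]
    ring
  · rw [Gg, Finset.mul_sum]
    refine Finset.sum_congr rfl fun S hS => ?_
    rw [Finset.mem_powerset] at hS
    rw [dl_insert_top M hS]
    have hb := alt_bounds (dl_chain' S)
    have hk := alt_le M hS
    show q16 ^ (M + 1 + (dl S).sum) * z16 ^ ((M+1:ℕ) - ((M+1 : ℕ) - altSum (dl S)).toNat) = _
    rw [show (M+1:ℕ) - ((M+1 : ℕ) - altSum (dl S)).toNat = (altSum (dl S)).toNat from by omega,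
      pow_add]
    ring

theorem GH : ∀ M : ℕ, Gg M = Hh M ∧ Gp M = Hp M := by
  intro M
  induction M with
  | zero =>
    have he : Finset.Icc 1 0 = (∅ : Finset ℕ) := by simp
    have hdl : dl (∅ : Finset ℕ) = [] := by rw [dl, Finset.sort_empty]; rfl
    constructor
    · rw [Gg, he, Finset.powerset_empty, Finset.sum_singleton, hdl, Hh]
      simp [altSum, ev_zero]
    · rw [Gp, he, Finset.powerset_empty, Finset.sum_singleton, hdl, Hp]
      simp [altSum, ev_zero]
  | succ M ih =>
    rw [Gg_rec, Gp_rec, ih.1, ih.2, ← Hh_rec, ← Hp_rec]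
    exact ⟨rfl, rfl⟩

theorem card_eq (M n k : ℕ) :
    Nat.card {π : List ℕ // IsDistinctPartition π ∧ (∀ p ∈ π, p ≤ M) ∧ π.sum = n ∧ altSum π = (k : ℤ)}
      = (((Finset.Icc 1 M).powerset).filter
          (fun S => ((dl S).sum, (altSum (dl S)).toNat) = (n, k))).card := by
  have e : {π : List ℕ // IsDistinctPartition π ∧ (∀ p ∈ π, p ≤ M) ∧ π.sum = n ∧ altSum π = (k : ℤ)}
      ≃ {S : Finset ℕ // S ∈ ((Finset.Icc 1 M).powerset).filter
          (fun S => ((dl S).sum, (altSum (dl S)).toNat) = (n, k))} := by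
    refine ⟨fun x => ⟨x.1.toFinset, ?_⟩, fun x => ⟨dl x.1, ?_⟩, ?_, ?_⟩
    · obtain ⟨π, ⟨hch, hpos⟩, hle, hsum, halt⟩ := x
      simp only [Finset.mem_filter, Finset.mem_powerset]
      refine ⟨fun y hy => ?_, ?_⟩
      · rw [List.mem_toFinset] at hy
        exact Finset.mem_Icc.mpr ⟨hpos y hy, hle y hy⟩
      · rw [dl_toFinset hch, hsum, halt]
        simp
    · obtain ⟨S, hS⟩ := x
      rw [Finset.mem_filter, Finset.mem_powerset, Prod.mk.injEq] at hS
      obtain ⟨hsub, hsum, halt⟩ := hS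
      have hb := alt_bounds (dl_chain' S)
      exact ⟨⟨dl_chain' S, fun p hp => (Finset.mem_Icc.mp (hsub (mem_dl.mp hp))).1⟩,
        fun p hp => (Finset.mem_Icc.mp (hsub (mem_dl.mp hp))).2, hsum, by show altSum (dl S) = (k : ℤ); omega⟩
    · intro x
      exact Subtype.ext (dl_toFinset x.2.1.1)
    · intro x
      exact Subtype.ext (toFinset_dl x.1)
  rw [Nat.card_congr e, Nat.card_eq_fintype_card, Fintype.card_coe]

theorem partA (M : ℕ) :
    (∑ n ∈ Finset.range (M*(M+1)/2 + 1), ∑ k ∈ Finset.range (M+1),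
        (Nat.card {π : List ℕ // IsDistinctPartition π ∧ (∀ p ∈ π, p ≤ M) ∧
            π.sum = n ∧ altSum π = (k : ℤ)} : LaurentPolynomial (Polynomial ℚ)) * q16^n * z16^k)
      = Gg M := by
  classical
  have hmaps : ∀ S ∈ (Finset.Icc 1 M).powerset,
      ((dl S).sum, (altSum (dl S)).toNat) ∈ Finset.range (M*(M+1)/2 + 1) ×ˢ Finset.range (M+1) := by
    intro S hS
    rw [Finset.mem_powerset] at hS
    rw [Finset.mem_product, Finset.mem_range, Finset.mem_range]
    constructor
    · have := sum_bound M (dl S) (dl_chain' S)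
        (fun p hp => (Finset.mem_Icc.mp (hS (mem_dl.mp hp))).2)
      omega
    · have := alt_le M hS
      omega
  have hfib := Finset.sum_fiberwise_of_maps_to hmaps
    (fun S => q16^((dl S).sum) * z16^((altSum (dl S)).toNat))
  rw [Gg, ← hfib, ← Finset.sum_product']
  refine Finset.sum_congr rfl fun p hp => ?_
  rw [card_eq M p.1 p.2]
  have hterm : ∀ S ∈ ((Finset.Icc 1 M).powerset).filter
      (fun S => ((dl S).sum, (altSum (dl S)).toNat) = (p.1, p.2)),
      q16^((dl S).sum) * z16^((altSum (dl S)).toNat) = q16^p.1 * z16^p.2 := by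
    intro S hS
    rw [Finset.mem_filter, Prod.mk.injEq] at hS
    rw [hS.2.1, hS.2.2]
  have hfilter : ((Finset.Icc 1 M).powerset).filter
        (fun S => ((dl S).sum, (altSum (dl S)).toNat) = p)
      = ((Finset.Icc 1 M).powerset).filter
        (fun S => ((dl S).sum, (altSum (dl S)).toNat) = (p.1, p.2)) := by
    congr 1
  rw [hfilter, Finset.sum_congr rfl hterm, Finset.sum_const, nsmul_eq_mul, mul_assoc]

theorem stmt16 (N ν : ℕ) (hν : ν ≤ 1) :
    ((∑ n ∈ Finset.range ((2 * N + ν) * (2 * N + ν + 1) / 2 + 1),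
        ∑ k ∈ Finset.range (2 * N + ν + 1),
          (Nat.card {π : List ℕ // IsDistinctPartition π ∧ (∀ p ∈ π, p ≤ 2 * N + ν) ∧
              π.sum = n ∧ altSum π = (k : ℤ)} : LaurentPolynomial (Polynomial ℚ)) *
            q16 ^ n * z16 ^ k)
      = rhs16 N ν)
    ∧ ((∑ l ∈ Finset.range (2 * N + ν + 1),
          Polynomial.aeval (q16 ^ 2) (gaussPoly (2 * N + ν) l) * (z16 * q16) ^ l)
      = rhs16 N ν) := by
  constructor
  · rw [partA (2*N+ν), (GH (2*N+ν)).1, rhs16_eq]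
    interval_cases ν
    · exact (mainB N).1
    · exact (mainB N).2
  · exact partB N ν hν
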